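/- For every n ≥ 2 and every multiset S of n−1 positive integers, there exist a tree T on n vertices and a weight function ω assigning a positive integer weight to each vertex of T such that the split multiset 𝒮(T) equals S. (That is, every instance of the choosable-weights split reconstruction problem ChWSR is a Yes-instance.) -/

import Mathlib

open scoped Classical in
/-- The total weight of the component of `u` after deleting the edge `{u, v}`:
the sum of `ω w` over all vertices `w` that remain reachable from `u`. -/
noncomputable def sideWeight {V : Type*} [Fintype V] (G : SimpleGraph V)
    (ω : V → ℕ) (u v : V) : ℕ :=
  ∑ w : V, if (G.deleteEdges {s(u, v)}).Reachable w u then ω w else 0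

/-- The split of an edge of a vertex-weighted graph: the minimum of the total
weights of the two sides obtained by deleting the edge. -/
noncomputable def edgeSplit {V : Type*} [Fintype V] (G : SimpleGraph V)
    (ω : V → ℕ) : Sym2 V → ℕ :=
  Sym2.lift ⟨fun u v => min (sideWeight G ω u v) (sideWeight G ω v u),
    fun _ _ => min_comm _ _⟩

open scoped Classical in
/-- The split multiset `𝒮(T)` of a vertex-weighted graph: the multiset of the
splits of all its edges. -/
noncomputable def splitMultiset {V : Type*} [Fintype V] (G : SimpleGraph V)
    (ω : V → ℕ) : Multiset ℕ :=
  (Finset.univ.filter (fun e : Sym2 V => e ∈ G.edgeSet)).val.map (edgeSplit G ω)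

/-- The star graph on `Fin (m+2)` centered at `0`. -/
def starG (m : ℕ) : SimpleGraph (Fin (m+2)) where
  Adj u v := (u = 0 ∧ v ≠ 0) ∨ (v = 0 ∧ u ≠ 0)
  symm := by tauto
  loopless := ⟨by intro v; simp⟩

lemma starG_adj {m : ℕ} {u v : Fin (m+2)} :
    (starG m).Adj u v ↔ (u = 0 ∧ v ≠ 0) ∨ (v = 0 ∧ u ≠ 0) := Iff.rfl

lemma starG_connected (m : ℕ) : (starG m).Connected := by
  rw [SimpleGraph.connected_iff]
  refine ⟨fun u v => ?_, ⟨0⟩⟩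
  have key : ∀ w : Fin (m+2), (starG m).Reachable w 0 := by
    intro w
    by_cases hw : w = 0
    · subst hw; exact SimpleGraph.Reachable.refl 0
    · exact SimpleGraph.Adj.reachable (Or.inr ⟨rfl, hw⟩)
  exact (key u).trans (key v).symm

lemma starG_acyclic (m : ℕ) : (starG m).IsAcyclic := by
  intro v c hc
  cases c with
  | nil => exact hc.ne_nil rfl
  | cons h p =>
    cases p with
    | nil => simpa using hc.three_le_length
    | cons h' q =>
      cases q with
      | nil => simpa using hc.three_le_length
      | cons h'' r =>
        rename_i w x y
        have hnd := hc.edges_nodup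
        simp only [SimpleGraph.Walk.edges_cons, List.nodup_cons] at hnd
        rcases h with ⟨hv, hw⟩ | ⟨hw, hv⟩
        · -- v = 0, w ≠ 0, so next vertex x = 0, and s(v,w) = s(w,x)
          have hx : x = 0 := by
            rcases h' with ⟨h1, _⟩ | ⟨h1, _⟩
            · exact absurd h1 hw
            · exact h1
          exact hnd.1 (by subst hv hx; simp [Sym2.eq_swap])
        · -- w = 0, so x ≠ 0, so y = 0, and s(w,x) = s(x,y)
          have hx : x ≠ 0 := by
            rcases h' with ⟨_, h2⟩ | ⟨_, h2⟩
            · exact h2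
            · exact absurd hw h2
          have hy : y = 0 := by
            rcases h'' with ⟨h1, _⟩ | ⟨h1, _⟩
            · exact absurd h1 hx
            · exact h1
          exact hnd.2.1 (by subst hw hy; simp [Sym2.eq_swap])

lemma starG_reach_leaf {m : ℕ} {i : Fin (m+2)} (hi : i ≠ 0) (w : Fin (m+2)) :
    ((starG m).deleteEdges {s((0:Fin (m+2)), i)}).Reachable w i ↔ w = i := by
  constructor
  · intro h
    obtain ⟨p⟩ := h.symm
    cases p with
    | nil => rfl
    | cons hadj q =>
      exfalso
      rw [SimpleGraph.deleteEdges_adj] at hadj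
      obtain ⟨hadj, hne⟩ := hadj
      rcases hadj with ⟨h1, _⟩ | ⟨h1, _⟩
      · exact hi h1
      · exact hne (by rw [h1]; exact Sym2.eq_swap)
  · rintro rfl; exact SimpleGraph.Reachable.refl w

lemma starG_reach_center {m : ℕ} {i : Fin (m+2)} (hi : i ≠ 0) (w : Fin (m+2)) :
    ((starG m).deleteEdges {s((0:Fin (m+2)), i)}).Reachable w 0 ↔ w ≠ i := by
  constructor
  · rintro h rfl
    have := ((starG_reach_leaf hi 0).mp h.symm)
    exact hi this.symm
  · intro hw
    by_cases hw0 : w = 0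
    · subst hw0; exact SimpleGraph.Reachable.refl _
    · refine SimpleGraph.Adj.reachable ?_
      rw [SimpleGraph.deleteEdges_adj]
      refine ⟨Or.inr ⟨rfl, hw0⟩, ?_⟩
      simp only [Set.mem_singleton_iff, Sym2.eq_iff]
      push_neg
      exact ⟨fun h => absurd h hw0, fun h => absurd h hw⟩

lemma sideWeight_leaf {m : ℕ} {i : Fin (m+2)} (hi : i ≠ 0) (ω : Fin (m+2) → ℕ) :
    sideWeight (starG m) ω i 0 = ω i := by
  unfold sideWeight
  rw [show s(i, (0 : Fin (m+2))) = s(0, i) from Sym2.eq_swap]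
  simp only [starG_reach_leaf hi]
  simp

lemma sideWeight_center {m : ℕ} {i : Fin (m+2)} (hi : i ≠ 0) (ω : Fin (m+2) → ℕ) :
    ω i + sideWeight (starG m) ω 0 i = ∑ w, ω w := by
  unfold sideWeight
  simp only [starG_reach_center hi]
  rw [← Finset.sum_filter, Finset.filter_ne', Finset.add_sum_erase _ ω (Finset.mem_univ i)]

lemma edgeSplit_star {m : ℕ} {i : Fin (m+2)} (hi : i ≠ 0) (ω : Fin (m+2) → ℕ)
    (h2 : 2 * ω i ≤ ∑ w, ω w) : edgeSplit (starG m) ω s(0, i) = ω i := by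
  have hc := sideWeight_center hi ω
  have h3 : ω i ≤ sideWeight (starG m) ω 0 i := by omega
  rw [edgeSplit, Sym2.lift_mk]
  dsimp only
  rw [sideWeight_leaf hi, min_eq_right h3]

open scoped Classical in
lemma starG_edgeFinset (m : ℕ) :
    (Finset.univ.filter (fun e : Sym2 (Fin (m+2)) => e ∈ (starG m).edgeSet)) =
    (Finset.univ.filter (fun i : Fin (m+2) => i ≠ 0)).image
      (fun i => s((0 : Fin (m+2)), i)) := by
  ext e
  induction e with
  | _ u v =>
    simp only [Finset.mem_filter, Finset.mem_univ, true_and, Finset.mem_image,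
      SimpleGraph.mem_edgeSet, starG_adj, Sym2.eq_iff]
    aesop

open scoped Classical in
lemma splitMultiset_starG (m : ℕ) (ω : Fin (m+2) → ℕ)
    (h2 : ∀ i : Fin (m+2), i ≠ 0 → 2 * ω i ≤ ∑ w, ω w) :
    splitMultiset (starG m) ω = ↑(List.ofFn (fun j : Fin (m+1) => ω j.succ)) := by
  rw [splitMultiset, starG_edgeFinset]
  have hfilter : (Finset.univ.filter (fun i : Fin (m+2) => i ≠ 0)) =
      (Finset.univ : Finset (Fin (m+1))).image Fin.succ := by
    ext i
    simp only [Finset.mem_filter, Finset.mem_univ, true_and, Finset.mem_image]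
    constructor
    · intro hi
      exact ⟨i.pred hi, Fin.succ_pred i hi⟩
    · rintro ⟨j, _, rfl⟩
      exact Fin.succ_ne_zero j
  rw [hfilter, Finset.image_image]
  have hinj : Set.InjOn ((fun i : Fin (m+2) => s((0 : Fin (m+2)), i)) ∘ Fin.succ)
      (Finset.univ : Finset (Fin (m+1))) := by
    intro a _ b _ hab
    simp only [Function.comp_apply, Sym2.eq_iff] at hab
    rcases hab with ⟨_, h⟩ | ⟨h, h'⟩
    · exact Fin.succ_injective _ h
    · exact absurd h.symm (Fin.succ_ne_zero _)
  rw [Finset.image_val_of_injOn hinj, Multiset.map_map]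
  rw [Fin.univ_val_map]
  congr 1
  apply congrArg
  funext j
  simp only [Function.comp_apply]
  exact edgeSplit_star (Fin.succ_ne_zero j) ω (h2 _ (Fin.succ_ne_zero j))

/-- ChWSR is always a Yes-instance: for every `n ≥ 2` and every
multiset `S` of `n−1` positive integers, there are a tree `T` on `n` vertices and
positive integer vertex weights whose split multiset equals `S`. -/
theorem stmt_14 (n : ℕ) (hn : 2 ≤ n) (S : Multiset ℕ)
    (hcard : Multiset.card S = n - 1)
    (hpos : ∀ x ∈ S, 0 < x) :
    ∃ (G : SimpleGraph (Fin n)) (ω : Fin n → ℕ),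
      G.Connected ∧ G.IsAcyclic ∧ (∀ v, 0 < ω v) ∧ splitMultiset G ω = S := by
  obtain ⟨m, rfl⟩ : ∃ m, n = m + 2 := ⟨n - 2, by omega⟩
  obtain ⟨l, rfl⟩ : ∃ l : List ℕ, (↑l : Multiset ℕ) = S := ⟨S.toList, S.coe_toList⟩
  have hlen : l.length = m + 1 := by
    have := hcard
    rw [Multiset.coe_card] at this
    omega
  set f : Fin (m+1) → ℕ := fun j => l.get (Fin.cast hlen.symm j) with hf
  have hofn : List.ofFn f = l := (List.ofFn_congr hlen l.get).symm.trans (List.ofFn_get l)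
  set ω : Fin (m+2) → ℕ := Fin.cons l.sum f with hω
  have hωsucc : ∀ j : Fin (m+1), ω j.succ = f j := fun j => Fin.cons_succ _ _ _
  have hω0 : ω 0 = l.sum := Fin.cons_zero _ _
  have hmem : ∀ j : Fin (m+1), f j ∈ (↑l : Multiset ℕ) := by
    intro j
    exact Multiset.mem_coe.mpr (l.get_mem _)
  have hfle : ∀ j : Fin (m+1), f j ≤ l.sum := by
    intro j
    have := Multiset.single_le_sum (fun x _ => Nat.zero_le x) (f j) (hmem j)
    simpa using this
  have hfsum : ∑ j : Fin (m+1), f j = l.sum := by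
    conv_rhs => rw [← hofn]
    rw [List.sum_ofFn]
  have hsum : ∑ w : Fin (m+2), ω w = l.sum + l.sum := by
    rw [Fin.sum_univ_succ, hω0, Finset.sum_congr rfl (fun j _ => hωsucc j), hfsum]
  have hpos' : ∀ v, 0 < ω v := by
    have hl0 : 0 < l.sum :=
      lt_of_lt_of_le (hpos _ (hmem 0)) (hfle 0)
    intro v
    induction v using Fin.cases with
    | zero => rw [hω0]; exact hl0
    | succ j => rw [hωsucc]; exact hpos _ (hmem j)
  refine ⟨starG m, ω, starG_connected m, starG_acyclic m, hpos', ?_⟩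
  rw [splitMultiset_starG m ω ?_]
  · rw [show (fun j : Fin (m+1) => ω j.succ) = f from funext hωsucc, hofn]
  · intro i hi
    induction i using Fin.cases with
    | zero => exact absurd rfl hi
    | succ j =>
      rw [hωsucc, hsum]
      have := hfle j
      omega
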